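/- Let n ≥ 1 and let D, X be n×n complex matrices. Then ‖[D,X] - I‖_op ≥ 1, where ‖·‖_op is the operator norm. -/

import Mathlib

open Polynomial in
lemma aux_mem_spectrum_of_isRoot {n : ℕ} (M : Matrix (Fin n) (Fin n) ℂ) {μ : ℂ}
    (h : M.charpoly.IsRoot μ) : μ ∈ spectrum ℂ M := by
  rw [spectrum.mem_iff]
  intro hu
  rw [Matrix.isUnit_iff_isUnit_det] at hu
  have key : M.charpoly.eval μ = (algebraMap ℂ (Matrix (Fin n) (Fin n) ℂ) μ - M).det := by
    rw [Matrix.charpoly, _root_.eval_det, Matrix.matPolyEquiv_charmatrix]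
    simp [Matrix.scalar, Matrix.algebraMap_eq_diagonal]
  rw [Polynomial.IsRoot, key] at h
  rw [h] at hu
  exact hu.ne_zero rfl

open Polynomial in
open scoped Matrix.Norms.L2Operator in
/-- For `n × n` complex matrices, `‖[D,X] - I‖ ≥ 1` in the operator norm. -/
theorem matrix_commutator_dist_ge_one (n : ℕ) (hn : 1 ≤ n)
    (D X : Matrix (Fin n) (Fin n) ℂ) :
    1 ≤ ‖D * X - X * D - 1‖ := by
  set M : Matrix (Fin n) (Fin n) ℂ := D * X - X * D - 1 with hM
  have htr : M.trace = -(n : ℂ) := by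
    simp [hM, Matrix.trace_sub, Matrix.trace_mul_comm D X]
  have hsum : M.charpoly.roots.sum = -(n : ℂ) := by
    rw [← Matrix.trace_eq_sum_roots_charpoly, htr]
  have hcard : Multiset.card M.charpoly.roots = n := by
    rw [(Polynomial.splits_iff_card_roots).mp (IsAlgClosed.splits M.charpoly)]
    simp
  -- there exists a root with norm ≥ 1
  have hex : ∃ μ ∈ M.charpoly.roots, 1 ≤ ‖μ‖ := by
    by_contra hcon
    push_neg at hcon
    have h1 : (n : ℝ) = ‖M.charpoly.roots.sum‖ := by rw [hsum]; simp
    have h2 : ‖M.charpoly.roots.sum‖ ≤ (M.charpoly.roots.map norm).sum :=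
      norm_multiset_sum_le _
    have h3 : (M.charpoly.roots.map norm).sum < (M.charpoly.roots.map (fun _ => (1:ℝ))).sum := by
      apply Multiset.sum_lt_sum_of_nonempty
      · intro h
        rw [h] at hcard
        simp at hcard
        omega
      · exact hcon
    have h4 : (M.charpoly.roots.map (fun _ => (1:ℝ))).sum = n := by
      simp [hcard]
    linarith
  haveI : Nonempty (Fin n) := Fin.pos_iff_nonempty.mp hn
  obtain ⟨μ, hμ, h1μ⟩ := hex
  have hspec : μ ∈ spectrum ℂ M :=
    aux_mem_spectrum_of_isRoot M (Polynomial.isRoot_of_mem_roots hμ)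
  calc 1 ≤ ‖μ‖ := h1μ
    _ ≤ ‖M‖ := spectrum.norm_le_norm_of_mem hspec
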